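/- Let s_k = sin(kπ/9) for k = 1,2,3,4, and let λ = s₄/s₁, λ₂ = −s₁/s₂, λ₃ = s₂/s₄. Then λ₂ and λ₃ satisfy x³ − 3x² + 1 = 0, so X³ − 3X² + 1 = (X − λ)(X − λ₂)(X − λ₃); moreover −1 < λ₂ < 0 and 0 < λ₃ < 1 while λ > 1. Consequently λ is a Pisot–Vijayaraghavan (PV) number: it is an algebraic integer greater than 1 all of whose algebraic conjugates have modulus strictly less than 1. -/

import Mathlib

open Real Polynomial

/-- With `s_k = sin(kπ/9)`, `λ = s₄/s₁`, `λ₂ = −s₁/s₂`, `λ₃ = s₂/s₄`: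
`λ₂` and `λ₃` are roots of `x³ − 3x² + 1`, so
`X³ − 3X² + 1 = (X − λ)(X − λ₂)(X − λ₃)`; moreover `−1 < λ₂ < 0`, `0 < λ₃ < 1`
and `λ > 1`. Consequently `λ` is a PV number: an algebraic integer greater
than `1` all of whose other conjugates have modulus strictly less than `1`. -/
theorem lambda_is_PV (s : ℕ → ℝ) (hs : ∀ k, s k = Real.sin ((k : ℝ) * π / 9))
    (lam lam2 lam3 : ℝ)
    (h1 : lam = s 4 / s 1) (h2 : lam2 = -(s 1 / s 2)) (h3 : lam3 = s 2 / s 4) :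
    lam2 ^ 3 - 3 * lam2 ^ 2 + 1 = 0 ∧
    lam3 ^ 3 - 3 * lam3 ^ 2 + 1 = 0 ∧
    (X ^ 3 - 3 * X ^ 2 + 1 : ℝ[X]) = (X - C lam) * (X - C lam2) * (X - C lam3) ∧
    (-1 < lam2 ∧ lam2 < 0) ∧ (0 < lam3 ∧ lam3 < 1) ∧ 1 < lam ∧
    IsIntegral ℤ lam ∧
    (∀ z : ℂ, ((minpoly ℚ lam).map (algebraMap ℚ ℂ)).IsRoot z → z ≠ (lam : ℂ) →
      ‖z‖ < 1) := by
  have hπ := Real.pi_pos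
  set c : ℝ := Real.cos (π / 9) with hc
  -- cubic equation for c
  have hcube : 8 * c ^ 3 - 6 * c - 1 = 0 := by
    have h3m := Real.cos_three_mul (π / 9)
    rw [show 3 * (π / 9) = π / 3 by ring, Real.cos_pi_div_three] at h3m
    rw [hc]; nlinarith [h3m]
  -- bounds on c
  have hc_half : 1 / 2 < c := by
    have := Real.cos_lt_cos_of_nonneg_of_le_pi (by positivity : (0:ℝ) ≤ π / 9)
      (by linarith : π / 3 ≤ π) (by linarith : π / 9 < π / 3)
    rwa [Real.cos_pi_div_three] at this
  have hcpos : 0 < c := by linarith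
  have hclb : (0.9 : ℝ) < c := by
    by_contra hcon
    push_neg at hcon
    have h1' : (0:ℝ) ≤ c - 1/2 := by linarith
    have h2' : (0:ℝ) ≤ 0.9 - c := by linarith
    nlinarith [hcube, mul_nonneg h1' h2', mul_nonneg (mul_nonneg h1' h2') (le_of_lt hcpos)]
  have hq : 0 < 2 * c ^ 2 - 1 := by nlinarith
  have hq3 : (1:ℝ) < 2 * (2 * c ^ 2 - 1) := by nlinarith
  -- sine values
  have hs1 : s 1 = Real.sin (π / 9) := by rw [hs 1]; norm_num
  have hs1pos : 0 < s 1 := by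
    rw [hs1]; exact Real.sin_pos_of_pos_of_lt_pi (by positivity) (by linarith)
  have e2 : s 2 = 2 * s 1 * c := by
    rw [hs 2, hs1, hc, show ((2:ℕ):ℝ) * π / 9 = 2 * (π / 9) by push_cast; ring,
      Real.sin_two_mul]
  have e4 : s 4 = 2 * s 2 * (2 * c ^ 2 - 1) := by
    rw [hs 4, hs 2, hc, show ((4:ℕ):ℝ) * π / 9 = 2 * (2 * (π / 9)) by push_cast; ring,
      Real.sin_two_mul, show ((2:ℕ):ℝ) * π / 9 = 2 * (π / 9) by push_cast; ring,
      Real.cos_two_mul]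
  have hs2pos : 0 < s 2 := by rw [e2]; positivity
  have hs4pos : 0 < s 4 := by rw [e4]; positivity
  -- closed forms
  have hlam : lam = 2 * c + 1 := by
    rw [h1, e4, e2, div_eq_iff (ne_of_gt hs1pos)]
    linear_combination (s 1) * hcube
  have hlam2 : lam2 = -(1 / (2 * c)) := by
    rw [h2, e2, neg_inj, div_eq_div_iff (by positivity) (by positivity)]
    ring
  have hlam3 : lam3 = 1 / (2 * (2 * c ^ 2 - 1)) := by
    rw [h3, e4, div_eq_div_iff (by positivity) (by positivity)]
    ring
  -- cubic identities
  have P2 : lam2 ^ 3 - 3 * lam2 ^ 2 + 1 = 0 := by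
    rw [hlam2]
    field_simp
    linear_combination hcube
  have P3 : lam3 ^ 3 - 3 * lam3 ^ 2 + 1 = 0 := by
    rw [hlam3]
    field_simp
    linear_combination (1 - 6 * c + 8 * c ^ 3) * hcube
  have P1 : lam ^ 3 - 3 * lam ^ 2 + 1 = 0 := by
    rw [hlam]; linear_combination hcube
  -- Vieta
  have VA : lam + lam2 + lam3 = 3 := by
    rw [hlam, hlam2, hlam3]
    field_simp
    linear_combination (c - 1) * hcube
  have VB : lam * lam2 + lam * lam3 + lam2 * lam3 = 0 := by
    rw [hlam, hlam2, hlam3]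
    field_simp
    linear_combination (-1 : ℝ) * hcube
  have VC : lam * lam2 * lam3 = -1 := by
    rw [hlam, hlam2, hlam3]
    field_simp
    linear_combination hcube
  -- bounds
  have blam2 : -1 < lam2 ∧ lam2 < 0 := by
    constructor
    · rw [hlam2, neg_lt, neg_neg, div_lt_one (by positivity)]; linarith
    · rw [hlam2, Left.neg_neg_iff]; positivity
  have blam3 : 0 < lam3 ∧ lam3 < 1 := by
    constructor
    · rw [hlam3]; positivity
    · rw [hlam3, div_lt_one (by positivity)]; linarith
  have blam : 1 < lam := by rw [hlam]; linarith
  -- factorization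
  have hfac : (X ^ 3 - 3 * X ^ 2 + 1 : ℝ[X]) = (X - C lam) * (X - C lam2) * (X - C lam3) := by
    have expand : ((X : ℝ[X]) - C lam) * (X - C lam2) * (X - C lam3)
        = X ^ 3 - C (lam + lam2 + lam3) * X ^ 2
          + C (lam * lam2 + lam * lam3 + lam2 * lam3) * X - C (lam * lam2 * lam3) := by
      simp only [map_add, map_mul]
      ring
    rw [expand, VA, VB, VC]
    simp only [map_ofNat, map_zero, map_neg, map_one]
    ring
  refine ⟨P2, P3, hfac, blam2, blam3, blam, ?_, ?_⟩
  · -- integral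
    refine ⟨X ^ 3 - 3 * X ^ 2 + 1, ?_, ?_⟩
    · monicity!
    · simp only [eval₂_add, eval₂_sub, eval₂_mul, eval₂_pow, eval₂_X, eval₂_one, eval₂_ofNat]
      linear_combination P1
  · -- conjugates
    intro z hz hne
    have hdvd : minpoly ℚ lam ∣ (X ^ 3 - 3 * X ^ 2 + 1 : ℚ[X]) := by
      apply minpoly.dvd
      simp only [map_add, map_sub, map_pow, map_mul, aeval_X, map_one, map_ofNat]
      linear_combination P1
    obtain ⟨r, hr⟩ := hdvd
    have hz0 : z ^ 3 - 3 * z ^ 2 + 1 = 0 := by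
      have : Polynomial.eval z (Polynomial.map (algebraMap ℚ ℂ) (X ^ 3 - 3 * X ^ 2 + 1 : ℚ[X])) = 0 := by
        rw [hr, Polynomial.map_mul, Polynomial.eval_mul, hz, zero_mul]
      simpa using this
    have VA' : ((lam : ℂ) + lam2 + lam3) = 3 := by exact_mod_cast congrArg Complex.ofReal VA
    have VB' : ((lam : ℂ) * lam2 + lam * lam3 + lam2 * lam3) = 0 := by
      exact_mod_cast congrArg Complex.ofReal VB
    have VC' : ((lam : ℂ) * lam2 * lam3) = -1 := by exact_mod_cast congrArg Complex.ofReal VC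
    have hfac' : (z - (lam : ℂ)) * (z - (lam2 : ℂ)) * (z - (lam3 : ℂ)) = 0 := by
      linear_combination hz0 - z ^ 2 * VA' + z * VB' - VC'
    rcases mul_eq_zero.mp hfac' with h | h
    · rcases mul_eq_zero.mp h with h' | h'
      · exact absurd (sub_eq_zero.mp h') hne
      · rw [sub_eq_zero.mp h', Complex.norm_real, Real.norm_eq_abs, abs_lt]
        constructor <;> linarith [blam2.1, blam2.2]
    · rw [sub_eq_zero.mp h, Complex.norm_real, Real.norm_eq_abs, abs_lt]
      constructor <;> linarith [blam3.1, blam3.2]
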